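/- arXiv:1803.00281 — 2 statements merged into one kernel-verified Lean document; each statement's English description precedes it below -/
import Mathlib

section
/- For any digraph D and integers 2 ≤ k ≤ n, κ_k(D) ≤ min{δ⁻(D), δ⁺(D)}, where δ⁻(D) and δ⁺(D) are the minimum in-degree and minimum out-degree of D. -/
/-- A digraph on vertex type `V`: a loopless binary arc relation. -/
structure Dgraph (V : Type) where
  Arc : V → V → Prop
  loopless : ∀ v, ¬ Arc v v

namespace Dgraph

variable {V : Type}

/-- A digraph is strong (strongly connected) if every vertex reaches every vertex. -/
def IsStrong (D : Dgraph V) : Prop := ∀ u v : V, Relation.ReflTransGen D.Arc u v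

/-- A strong subgraph of `D`: a vertex set together with an arc relation contained
in `D`'s arcs, whose arcs stay inside the vertex set, and which is strongly
connected on its vertex set. -/
structure StrongSub (D : Dgraph V) where
  verts : Set V
  Arc : V → V → Prop
  arc_sub : ∀ u v, Arc u v → D.Arc u v
  arc_mem : ∀ u v, Arc u v → u ∈ verts ∧ v ∈ verts
  strong : ∀ u ∈ verts, ∀ v ∈ verts, Relation.ReflTransGen Arc u v

/-- `κ_S(D)`: the maximum number of pairwise internally disjoint strong subgraphs
of `D` containing `S` (they share exactly the vertices of `S` and no arcs). -/
noncomputable def kappaS (D : Dgraph V) (S : Set V) : ℕ :=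
  sSup {p : ℕ | ∃ f : Fin p → StrongSub D,
    (∀ i, S ⊆ (f i).verts) ∧
    (∀ i j, i ≠ j → (f i).verts ∩ (f j).verts = S) ∧
    (∀ i j, i ≠ j → ∀ u v, ¬ ((f i).Arc u v ∧ (f j).Arc u v))}

/-- The strong subgraph `k`-connectivity `κ_k(D)`. -/
noncomputable def kappa [Fintype V] (D : Dgraph V) (k : ℕ) : ℕ :=
  sInf {m : ℕ | ∃ S : Finset V, S.card = k ∧ kappaS D ↑S = m}

/-- The number of arcs of a digraph. -/
noncomputable def arcCount (D : Dgraph V) : ℕ :=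
  Nat.card {p : V × V // D.Arc p.1 p.2}

/-- Delete the arc `e` from `D`. -/
def deleteArc (D : Dgraph V) (e : V × V) : Dgraph V where
  Arc u v := D.Arc u v ∧ (u, v) ≠ e
  loopless v h := D.loopless v h.1

/-- `D` is minimally strong subgraph `(k,ℓ)`-connected. -/
noncomputable def MinSSC [Fintype V] (D : Dgraph V) (k ℓ : ℕ) : Prop :=
  ℓ ≤ kappa D k ∧ ∀ e : V × V, D.Arc e.1 e.2 → kappa (deleteArc D e) k ≤ ℓ - 1

/-- Minimum out-degree `δ⁺(D)`. -/
noncomputable def minOutDeg [Fintype V] (D : Dgraph V) : ℕ :=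
  sInf (Set.range fun v => Nat.card {w : V // D.Arc v w})

/-- Minimum in-degree `δ⁻(D)`. -/
noncomputable def minInDeg [Fintype V] (D : Dgraph V) : ℕ :=
  sInf (Set.range fun v => Nat.card {w : V // D.Arc w v})

/-- The subdigraph of `D` induced on a vertex set `W`. -/
def induce (D : Dgraph V) (W : Set V) : Dgraph W where
  Arc u v := D.Arc u v
  loopless v h := D.loopless v h

/-- The strong vertex-connectivity `κ(D)`: the minimum number of vertices whose
removal leaves a non-strong digraph, or `n - 1` if there is no such set. -/
noncomputable def vertConn [Fintype V] (D : Dgraph V) : ℕ :=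
  sInf ({Fintype.card V - 1} ∪
    {m : ℕ | ∃ Q : Finset V, Q.card = m ∧ ¬ IsStrong (D.induce (↑Q : Set V)ᶜ)})

/-- `D` is symmetric if the reverse of every arc is an arc. -/
def IsSymmetric (D : Dgraph V) : Prop := ∀ u v, D.Arc u v → D.Arc v u

/-- The underlying undirected (simple) graph of a digraph. -/
def underlying (D : Dgraph V) : SimpleGraph V where
  Adj u v := D.Arc u v ∨ D.Arc v u
  symm := by constructor; intro u v h; tauto
  loopless := by constructor; intro v h; rcases h with h | h <;> exact D.loopless v h

/-- The minimum number of arcs of a minimally strong subgraph `(k,ℓ)`-connected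
digraph on `n` vertices. -/
noncomputable def fMin (n k ℓ : ℕ) : ℕ :=
  sInf {m : ℕ | ∃ D : Dgraph (Fin n), MinSSC D k ℓ ∧ arcCount D = m}

/-- The maximum number of arcs of a minimally strong subgraph `(k,ℓ)`-connected
digraph on `n` vertices. -/
noncomputable def FMax (n k ℓ : ℕ) : ℕ :=
  sSup {m : ℕ | ∃ D : Dgraph (Fin n), MinSSC D k ℓ ∧ arcCount D = m}

end Dgraph

open Dgraph in
lemma kappaS_nonempty {V : Type} (D : Dgraph V) (S : Set V) :
    (0 : ℕ) ∈ {p : ℕ | ∃ f : Fin p → StrongSub D,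
      (∀ i, S ⊆ (f i).verts) ∧
      (∀ i j, i ≠ j → (f i).verts ∩ (f j).verts = S) ∧
      (∀ i j, i ≠ j → ∀ u v, ¬ ((f i).Arc u v ∧ (f j).Arc u v))} := by
  exact ⟨Fin.elim0, fun i => i.elim0, fun i => i.elim0, fun i => i.elim0⟩

open Dgraph in
lemma kappaS_le_inDeg {V : Type} [Fintype V] (D : Dgraph V) (S : Finset V) (v : V)
    (hv : v ∈ S) (hcard : 2 ≤ S.card) :
    D.kappaS ↑S ≤ Nat.card {w : V // D.Arc w v} := by
  apply csSup_le ⟨0, kappaS_nonempty D ↑S⟩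
  rintro p ⟨f, hS, _hV, hA⟩
  obtain ⟨u, hu, hune⟩ := Finset.exists_mem_ne (s := S) (by omega) v
  have h : ∀ i : Fin p, ∃ w, (f i).Arc w v := by
    intro i
    have hpath := (f i).strong u (hS i (by exact_mod_cast hu)) v
      (hS i (by exact_mod_cast hv))
    cases hpath with
    | refl => exact absurd rfl hune
    | tail _ h => exact ⟨_, h⟩
  choose g hg using h
  have inj : Function.Injective
      (fun i => (⟨g i, (f i).arc_sub _ _ (hg i)⟩ : {w : V // D.Arc w v})) := by
    intro i j heq
    by_contra hne
    have hgij : g i = g j := congrArg Subtype.val heq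
    exact hA i j hne (g i) v ⟨hg i, hgij ▸ hg j⟩
  calc p = Nat.card (Fin p) := (Nat.card_eq_fintype_card.trans (Fintype.card_fin p)).symm
    _ ≤ Nat.card {w : V // D.Arc w v} := Nat.card_le_card_of_injective _ inj

open Dgraph in
lemma kappaS_le_outDeg {V : Type} [Fintype V] (D : Dgraph V) (S : Finset V) (v : V)
    (hv : v ∈ S) (hcard : 2 ≤ S.card) :
    D.kappaS ↑S ≤ Nat.card {w : V // D.Arc v w} := by
  apply csSup_le ⟨0, kappaS_nonempty D ↑S⟩
  rintro p ⟨f, hS, _hV, hA⟩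
  obtain ⟨u, hu, hune⟩ := Finset.exists_mem_ne (s := S) (by omega) v
  have h : ∀ i : Fin p, ∃ w, (f i).Arc v w := by
    intro i
    have hpath := (f i).strong v (hS i (by exact_mod_cast hv)) u
      (hS i (by exact_mod_cast hu))
    rcases hpath.cases_head with heq | ⟨c, hc, _⟩
    · exact absurd heq.symm hune
    · exact ⟨c, hc⟩
  choose g hg using h
  have inj : Function.Injective
      (fun i => (⟨g i, (f i).arc_sub _ _ (hg i)⟩ : {w : V // D.Arc v w})) := by
    intro i j heq
    by_contra hne
    have hgij : g i = g j := congrArg Subtype.val heq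
    exact hA i j hne v (g i) ⟨hg i, hgij ▸ hg j⟩
  calc p = Nat.card (Fin p) := (Nat.card_eq_fintype_card.trans (Fintype.card_fin p)).symm
    _ ≤ Nat.card {w : V // D.Arc v w} := Nat.card_le_card_of_injective _ inj

open Dgraph in
lemma kappa_le_kappaS {V : Type} [Fintype V] (D : Dgraph V) (k : ℕ)
    (S : Finset V) (hcard : S.card = k) : D.kappa k ≤ D.kappaS ↑S :=
  Nat.sInf_le ⟨S, hcard, rfl⟩

/-- For any digraph `D` and `2 ≤ k ≤ n`, `κ_k(D) ≤ min {δ⁻(D), δ⁺(D)}`. -/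
theorem stmt1 {V : Type} [Fintype V] (D : Dgraph V) (k : ℕ)
    (hk2 : 2 ≤ k) (hkn : k ≤ Fintype.card V) :
    D.kappa k ≤ min D.minInDeg D.minOutDeg := by
  have hne : Nonempty V := by
    rw [← Fintype.card_pos_iff]; omega
  refine le_min ?_ ?_
  · -- κ ≤ minInDeg
    obtain ⟨v, hv⟩ := Nat.sInf_mem
      (Set.range_nonempty (fun v : V => Nat.card {w : V // D.Arc w v}))
    obtain ⟨S, hvS, hScard⟩ := Finset.exists_superset_card_eq
      (s := {v}) (n := k) (by rw [Finset.card_singleton]; omega) hkn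
    calc D.kappa k ≤ D.kappaS ↑S := kappa_le_kappaS D k S hScard
      _ ≤ Nat.card {w : V // D.Arc w v} :=
          kappaS_le_inDeg D S v (hvS (Finset.mem_singleton_self v)) (by omega)
      _ = D.minInDeg := hv
  · -- κ ≤ minOutDeg
    obtain ⟨v, hv⟩ := Nat.sInf_mem
      (Set.range_nonempty (fun v : V => Nat.card {w : V // D.Arc v w}))
    obtain ⟨S, hvS, hScard⟩ := Finset.exists_superset_card_eq
      (s := {v}) (n := k) (by rw [Finset.card_singleton]; omega) hkn
    calc D.kappa k ≤ D.kappaS ↑S := kappa_le_kappaS D k S hScard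
      _ ≤ Nat.card {w : V // D.Arc v w} :=
          kappaS_le_outDeg D S v (hvS (Finset.mem_singleton_self v)) (by omega)
      _ = D.minOutDeg := hv
end

section
/- For any digraph D on n vertices and any integer k with 2 ≤ k ≤ n and n ≥ κ(D)+k, we have κ_k(D) ≤ κ(D), where κ(D) denotes the (vertex) strong connectivity of D. -/
/-- For any digraph `D` on `n` vertices, `2 ≤ k ≤ n` and `n ≥ κ(D) + k`,
`κ_k(D) ≤ κ(D)`. -/
theorem stmt2 {V : Type} [Fintype V] (D : Dgraph V) (k : ℕ)
    (hk2 : 2 ≤ k) (hkn : k ≤ Fintype.card V)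
    (hn : D.vertConn + k ≤ Fintype.card V) :
    D.kappa k ≤ D.vertConn := by
  classical
  set n := Fintype.card V with hncard
  -- the defining set of vertConn is nonempty, so its sInf is attained
  have hmem : D.vertConn ∈ ({n - 1} ∪
      {m : ℕ | ∃ Q : Finset V, Q.card = m ∧ ¬ Dgraph.IsStrong (D.induce (↑Q : Set V)ᶜ)}) :=
    Nat.sInf_mem ⟨n - 1, Or.inl rfl⟩
  rcases hmem with h1 | ⟨Q, hQcard, hQns⟩
  · -- vertConn = n - 1 contradicts n ≥ vertConn + k with k ≥ 2 ≤ n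
    exfalso
    simp only [Set.mem_singleton_iff] at h1
    omega
  · -- main case: Q cuts D
    rw [Dgraph.IsStrong] at hQns
    push_neg at hQns
    obtain ⟨u, v, huv⟩ := hQns
    have hune : u.1 ≠ v.1 := by
      intro h
      exact huv (by rw [Subtype.ext h])
    -- choose S ⊆ Qᶜ of size k containing u, v
    have hsub : ({u.1, v.1} : Finset V) ⊆ Qᶜ := by
      intro x hx
      rw [Finset.mem_insert, Finset.mem_singleton] at hx
      rw [Finset.mem_compl]
      rcases hx with rfl | rfl
      · exact u.2
      · exact v.2
    have hcard2 : ({u.1, v.1} : Finset V).card = 2 := Finset.card_pair hune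
    have hQcc : Qᶜ.card = n - Q.card := Finset.card_compl Q
    have hconn : Q.card + k ≤ Fintype.card V := by rw [hQcard]; exact hn
    have hkQ : k ≤ Qᶜ.card := by rw [hQcc]; omega
    obtain ⟨S, hSsub, hSQc, hScard⟩ :=
      Finset.exists_subsuperset_card_eq hsub (by rw [hcard2]; exact hk2) hkQ
    -- it suffices to bound kappaS D S
    have hkS : D.kappaS ↑S ≤ D.vertConn := by
      apply csSup_le'
      rintro p ⟨f, hf1, hf2, _⟩
      -- each strong subgraph must meet Q
      have hhit : ∀ i : Fin p, ∃ q, q ∈ (f i).verts ∧ q ∈ Q := by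
        intro i
        by_contra hc
        push_neg at hc
        have hvsub : (f i).verts ⊆ ((↑Q : Set V)ᶜ) := fun x hx hxQ => hc x hx hxQ
        have hu : u.1 ∈ (f i).verts := hf1 i (by
          simpa using hSsub (Finset.mem_insert_self _ _))
        have hv : v.1 ∈ (f i).verts := hf1 i (by
          simpa using hSsub (by simp))
        have key : ∀ b, Relation.ReflTransGen (f i).Arc u.1 b →
            ∀ hb : b ∈ ((↑Q : Set V)ᶜ),
            Relation.ReflTransGen (D.induce (↑Q : Set V)ᶜ).Arc u ⟨b, hb⟩ := by
          intro b hwalk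
          induction hwalk with
          | refl => intro hb; exact Relation.ReflTransGen.refl
          | tail h1 harc ih =>
            intro hb
            have hc' := (f i).arc_mem _ _ harc
            exact (ih (hvsub hc'.1)).tail ((f i).arc_sub _ _ harc)
        exact huv (key v.1 ((f i).strong _ hu _ hv) v.2)
      choose q hqv hqQ using hhit
      have hinj : Function.Injective fun i => (⟨q i, hqQ i⟩ : {x // x ∈ Q}) := by
        intro i j hij
        by_contra hne
        have : q i ∈ (f i).verts ∩ (f j).verts := by
          constructor
          · exact hqv i
          · have : q i = q j := congrArg Subtype.val hij
            rw [this]; exact hqv j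
        rw [hf2 i j hne] at this
        have : q i ∈ Qᶜ := hSQc this
        exact (Finset.mem_compl.mp this) (hqQ i)
      calc p = Fintype.card (Fin p) := (Fintype.card_fin p).symm
        _ ≤ Fintype.card {x // x ∈ Q} := Fintype.card_le_of_injective _ hinj
        _ = Q.card := Fintype.card_coe Q
        _ = D.vertConn := hQcard
    calc D.kappa k ≤ D.kappaS ↑S := Nat.sInf_le ⟨S, hScard, rfl⟩
      _ ≤ D.vertConn := hkS
end
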